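/- arXiv:2103.12179 — 4 statements merged into one kernel-verified Lean document; each statement's English description precedes it below -/
import Mathlib

section
/- For every x > 0 and t > 0, the kernel q*_t(x,y) = (1/π) · 4y²t / ((y²−x²)² + 2t²(y²+x²) + t⁴) is nonnegative for all y ≥ 0 and integrates to 1 over y ∈ [0,∞): ∫_0^∞ q*_t(x,y) dy = 1. -/
open Real MeasureTheory

/-- Transition density of the radial part of a 3-dimensional Cauchy process. -/
noncomputable def radialCauchyDensity (t x y : ℝ) : ℝ :=
  (1 / π) * (4 * y ^ 2 * t) /
    ((y ^ 2 - x ^ 2) ^ 2 + 2 * t ^ 2 * (y ^ 2 + x ^ 2) + t ^ 4)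

/-- The radial Cauchy kernel is nonnegative and conservative: it integrates to one. -/
theorem radial_cauchy_conservative (x t : ℝ) (hx : 0 < x) (ht : 0 < t) :
    (∀ y : ℝ, 0 ≤ y → 0 ≤ radialCauchyDensity t x y) ∧
      ∫ y in Set.Ioi (0 : ℝ), radialCauchyDensity t x y = 1 := by
  have hπ : (0:ℝ) < π := Real.pi_pos
  have hnonneg : ∀ y : ℝ, 0 ≤ radialCauchyDensity t x y := by
    intro y
    unfold radialCauchyDensity
    apply div_nonneg
    · positivity
    · positivity
  refine ⟨fun y _ => hnonneg y, ?_⟩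
  set F : ℝ → ℝ := fun y =>
    (1 / (π * x)) * ((t / 2) * Real.log (((y - x) ^ 2 + t ^ 2) / ((y + x) ^ 2 + t ^ 2))
      + x * (Real.arctan ((y - x) / t) + Real.arctan ((y + x) / t))) with hF
  have hA : ∀ y : ℝ, (0:ℝ) < (y - x) ^ 2 + t ^ 2 := fun y => by positivity
  have hB : ∀ y : ℝ, (0:ℝ) < (y + x) ^ 2 + t ^ 2 := fun y => by positivity
  have hderiv : ∀ y ∈ Set.Ici (0:ℝ), HasDerivAt F (radialCauchyDensity t x y) y := by
    intro y _
    have hA' := hA y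
    have hB' := hB y
    have h1 : HasDerivAt (fun y : ℝ => (y - x) ^ 2 + t ^ 2) (2 * (y - x)) y := by
      have := ((hasDerivAt_id y).sub_const x).pow 2
      simpa using this.add_const (t ^ 2)
    have h2 : HasDerivAt (fun y : ℝ => (y + x) ^ 2 + t ^ 2) (2 * (y + x)) y := by
      have := ((hasDerivAt_id y).add_const x).pow 2
      simpa using this.add_const (t ^ 2)
    have hlog : HasDerivAt
        (fun y : ℝ => Real.log (((y - x) ^ 2 + t ^ 2) / ((y + x) ^ 2 + t ^ 2)))
        (2 * (y - x) / ((y - x) ^ 2 + t ^ 2) - 2 * (y + x) / ((y + x) ^ 2 + t ^ 2)) y := by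
      have : HasDerivAt (fun y : ℝ =>
          Real.log ((y - x) ^ 2 + t ^ 2) - Real.log ((y + x) ^ 2 + t ^ 2))
          (2 * (y - x) / ((y - x) ^ 2 + t ^ 2) - 2 * (y + x) / ((y + x) ^ 2 + t ^ 2)) y :=
        (h1.log hA'.ne').sub (h2.log hB'.ne')
      refine this.congr_of_eventuallyEq ?_
      filter_upwards with z
      rw [Real.log_div (hA z).ne' (hB z).ne']
    have harct1 : HasDerivAt (fun y : ℝ => Real.arctan ((y - x) / t))
        ((1 / t) / (1 + ((y - x) / t) ^ 2)) y := by
      have h : HasDerivAt (fun y : ℝ => (y - x) / t) (1 / t) y := by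
        simpa using ((hasDerivAt_id y).sub_const x).div_const t
      simpa [div_eq_mul_inv, mul_comm, Function.comp_def] using (Real.hasDerivAt_arctan ((y - x) / t)).comp y h
    have harct2 : HasDerivAt (fun y : ℝ => Real.arctan ((y + x) / t))
        ((1 / t) / (1 + ((y + x) / t) ^ 2)) y := by
      have h : HasDerivAt (fun y : ℝ => (y + x) / t) (1 / t) y := by
        simpa using ((hasDerivAt_id y).add_const x).div_const t
      simpa [div_eq_mul_inv, mul_comm, Function.comp_def] using (Real.hasDerivAt_arctan ((y + x) / t)).comp y h
    have hcomb : HasDerivAt F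
        ((1 / (π * x)) * ((t / 2) *
          (2 * (y - x) / ((y - x) ^ 2 + t ^ 2) - 2 * (y + x) / ((y + x) ^ 2 + t ^ 2))
          + x * ((1 / t) / (1 + ((y - x) / t) ^ 2) + (1 / t) / (1 + ((y + x) / t) ^ 2)))) y := by
      exact (((hlog.const_mul (t / 2)).add ((harct1.add harct2).const_mul x)).const_mul
        (1 / (π * x)))
    convert hcomb using 1
    unfold radialCauchyDensity
    have hD : (y ^ 2 - x ^ 2) ^ 2 + 2 * t ^ 2 * (y ^ 2 + x ^ 2) + t ^ 4
        = ((y - x) ^ 2 + t ^ 2) * ((y + x) ^ 2 + t ^ 2) := by ring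
    rw [hD]
    field_simp
    ring
  have hnonneg' : ∀ y ∈ Set.Ioi (0:ℝ), 0 ≤ radialCauchyDensity t x y :=
    fun y _ => hnonneg y
  have htend : Filter.Tendsto F Filter.atTop (nhds 1) := by
    have hxy : Filter.Tendsto (fun y : ℝ => x / y) Filter.atTop (nhds 0) :=
      tendsto_const_nhds.div_atTop Filter.tendsto_id
    have hty : Filter.Tendsto (fun y : ℝ => t / y) Filter.atTop (nhds 0) :=
      tendsto_const_nhds.div_atTop Filter.tendsto_id
    have hratio : Filter.Tendsto
        (fun y : ℝ => ((y - x) ^ 2 + t ^ 2) / ((y + x) ^ 2 + t ^ 2))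
        Filter.atTop (nhds 1) := by
      have hone : Filter.Tendsto (fun _ : ℝ => (1:ℝ)) Filter.atTop (nhds 1) :=
        tendsto_const_nhds
      have hnum : Filter.Tendsto (fun y : ℝ => (1 - x / y) ^ 2 + (t / y) ^ 2)
          Filter.atTop (nhds 1) := by
        have := ((hone.sub hxy).pow 2).add (hty.pow 2)
        simpa using this
      have hden : Filter.Tendsto (fun y : ℝ => (1 + x / y) ^ 2 + (t / y) ^ 2)
          Filter.atTop (nhds 1) := by
        have := ((hone.add hxy).pow 2).add (hty.pow 2)
        simpa using this
      have := hnum.div hden one_ne_zero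
      rw [div_one] at this
      refine this.congr' ?_
      filter_upwards [Filter.eventually_gt_atTop (0:ℝ)] with y hy
      show ((1 - x / y) ^ 2 + (t / y) ^ 2) / ((1 + x / y) ^ 2 + (t / y) ^ 2) = _
      have hy' : y ≠ 0 := hy.ne'
      field_simp
    have hlog : Filter.Tendsto
        (fun y : ℝ => Real.log (((y - x) ^ 2 + t ^ 2) / ((y + x) ^ 2 + t ^ 2)))
        Filter.atTop (nhds 0) := by
      have := (Real.continuousAt_log one_ne_zero).tendsto.comp hratio
      simpa [Function.comp_def] using this
    have harc : ∀ c : ℝ, Filter.Tendsto (fun y : ℝ => Real.arctan ((y + c) / t))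
        Filter.atTop (nhds (π / 2)) := by
      intro c
      have h1 : Filter.Tendsto (fun y : ℝ => (y + c) / t) Filter.atTop Filter.atTop :=
        (Filter.tendsto_atTop_add_const_right _ c Filter.tendsto_id).atTop_div_const ht
      exact (Real.tendsto_arctan_atTop.mono_right nhdsWithin_le_nhds).comp h1
    have harc1 : Filter.Tendsto (fun y : ℝ => Real.arctan ((y - x) / t))
        Filter.atTop (nhds (π / 2)) := by
      simpa [sub_eq_add_neg] using harc (-x)
    have h2 := (((hlog.const_mul (t / 2)).add
      ((harc1.add (harc x)).const_mul x)).const_mul (1 / (π * x)))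
    have : (1 / (π * x)) * ((t / 2) * 0 + x * (π / 2 + π / 2)) = 1 := by
      field_simp
      ring
    rw [this] at h2
    exact h2
  have key := MeasureTheory.integral_Ioi_of_hasDerivAt_of_nonneg' hderiv hnonneg' htend
  rw [key]
  have hF0 : F 0 = 0 := by
    simp only [hF]
    rw [show ((0:ℝ) - x) ^ 2 = (0 + x) ^ 2 by ring]
    rw [div_self (hB 0).ne', Real.log_one]
    rw [show ((0:ℝ) - x) / t = -((0 + x) / t) by ring, Real.arctan_neg]
    ring
  rw [hF0, sub_zero]
end

section
/- The principal value integral PV ∫_0^∞ u² log u / (u²−1)² du equals π²/8. Equivalently, lim_{ε→0⁺} [∫_0^{1−ε} + ∫_{1+ε}^∞] u² log u/(u²−1)² du = π²/8. -/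
open Real MeasureTheory Filter Set

/-! ### Auxiliary lemmas -/

lemma image_inv_Ioi {c : ℝ} (hc : 0 < c) :
    (fun x : ℝ => x⁻¹) '' Ioi c = Ioo 0 c⁻¹ := by
  ext x
  constructor
  · rintro ⟨y, hy, rfl⟩
    exact ⟨inv_pos.mpr (hc.trans hy), inv_strictAnti₀ hc hy⟩
  · rintro ⟨hx0, hxc⟩
    exact ⟨x⁻¹, by
      have := inv_strictAnti₀ hx0 hxc
      rwa [inv_inv] at this, inv_inv x⟩

lemma integral_inv_subst {c : ℝ} (hc : 0 < c) (G : ℝ → ℝ) :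
    ∫ x in Ioo (0:ℝ) c⁻¹, G x = ∫ x in Ioi c, (x ^ 2)⁻¹ * G x⁻¹ := by
  rw [← image_inv_Ioi hc,
    integral_image_eq_integral_abs_deriv_smul measurableSet_Ioi
      (fun x hx => (hasDerivAt_inv (ne_of_gt (hc.trans hx))).hasDerivWithinAt)
      (fun a _ b _ h => inv_injective h) G]
  refine setIntegral_congr_fun measurableSet_Ioi (fun x hx => ?_)
  have hx0 : (0:ℝ) < x := hc.trans hx
  rw [abs_neg, abs_inv, abs_of_nonneg (by positivity : (0:ℝ) ≤ x ^ 2), smul_eq_mul]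

lemma image_exp_neg_Ioi :
    (fun t : ℝ => Real.exp (-t)) '' Ioi 0 = Ioo 0 1 := by
  ext x
  constructor
  · rintro ⟨t, ht, rfl⟩
    exact ⟨exp_pos _, by
      rw [exp_lt_one_iff]; linarith [mem_Ioi.mp ht]⟩
  · rintro ⟨hx0, hx1⟩
    refine ⟨-Real.log x, ?_, by show Real.exp (-(-Real.log x)) = x; rw [neg_neg, exp_log hx0]⟩
    exact mem_Ioi.mpr (neg_pos.mpr (Real.log_neg hx0 hx1))

lemma integrable_mul_exp_neg_mul {r : ℝ} (hr : 1 ≤ r) :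
    IntegrableOn (fun t : ℝ => t * Real.exp (-(r * t))) (Ioi 0) := by
  have h2 := Real.GammaIntegral_convergent (by norm_num : (0:ℝ) < 2)
  refine Integrable.mono' h2 ?_ ?_
  · exact (measurable_id.mul (measurable_exp.comp
      (measurable_id.const_mul r).neg)).aestronglyMeasurable
  · filter_upwards [ae_restrict_mem measurableSet_Ioi] with t ht
    have ht0 : (0:ℝ) < t := ht
    rw [Real.norm_eq_abs, abs_of_nonneg (by positivity)]
    have h1 : Real.exp (-(r * t)) ≤ Real.exp (-t) := by
      apply Real.exp_le_exp.mpr; nlinarith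
    have h3 : t ^ ((2:ℝ) - 1) = t := by
      rw [show (2:ℝ) - 1 = 1 by norm_num, Real.rpow_one]
    calc t * Real.exp (-(r * t)) ≤ t * Real.exp (-t) := by nlinarith [Real.exp_pos (-(r*t))]
      _ = Real.exp (-t) * t ^ ((2:ℝ) - 1) := by rw [h3]; ring

lemma integral_pow_neg_log (n : ℕ) :
    ∫ u in Ioo (0:ℝ) 1, u ^ (2 * n) * (-Real.log u) = 1 / (2 * (n:ℝ) + 1) ^ 2 := by
  have hr : (0:ℝ) < 2 * n + 1 := by positivity
  rw [← image_exp_neg_Ioi,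
    integral_image_eq_integral_abs_deriv_smul measurableSet_Ioi
      (fun t _ => ((hasDerivAt_neg t).exp).hasDerivWithinAt)
      (fun a _ b _ h => by
        have := Real.exp_injective h; linarith) _]
  have : ∀ t ∈ Ioi (0:ℝ),
      |Real.exp (-t) * -1| • (Real.exp (-t) ^ (2 * n) * (-Real.log (Real.exp (-t))))
        = t ^ ((2:ℝ) - 1) * Real.exp (-((2 * (n:ℝ) + 1) * t)) := by
    intro t ht
    have ht0 : (0:ℝ) < t := ht
    rw [smul_eq_mul, abs_mul, abs_neg, abs_one, mul_one, abs_of_pos (exp_pos _),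
      Real.log_exp, show (2:ℝ) - 1 = 1 by norm_num, Real.rpow_one,
      ← Real.exp_nat_mul, neg_neg]
    rw [← mul_assoc, ← Real.exp_add, mul_comm]
    congr 1
    push_cast
    ring
  rw [setIntegral_congr_fun measurableSet_Ioi this,
    Real.integral_rpow_mul_exp_neg_mul_Ioi (by norm_num : (0:ℝ) < 2) hr,
    Real.Gamma_two, mul_one]
  rw [show ((2:ℝ)) = ((2:ℕ):ℝ) by norm_num, Real.rpow_natCast]
  push_cast
  field_simp

lemma integrableOn_pow_neg_log (n : ℕ) :
    IntegrableOn (fun u : ℝ => u ^ (2 * n) * (-Real.log u)) (Ioo 0 1) := by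
  rw [← image_exp_neg_Ioi,
    integrableOn_image_iff_integrableOn_abs_deriv_smul measurableSet_Ioi
      (fun t _ => ((hasDerivAt_neg t).exp).hasDerivWithinAt)
      (fun a _ b _ h => by have := Real.exp_injective h; linarith)]
  refine (integrable_mul_exp_neg_mul (r := 2 * (n:ℝ) + 1)
      (by linarith [Nat.cast_nonneg (α := ℝ) n])).congr_fun
    (fun t ht => ?_) measurableSet_Ioi
  have ht0 : (0:ℝ) < t := ht
  rw [smul_eq_mul, abs_mul, abs_neg, abs_one, mul_one, abs_of_pos (exp_pos _),
    Real.log_exp, ← Real.exp_nat_mul, neg_neg, ← mul_assoc, ← Real.exp_add, mul_comm]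
  congr 2
  push_cast
  ring

lemma hasSum_odd_inv_sq : HasSum (fun n : ℕ => 1 / (2 * (n:ℝ) + 1) ^ 2) (π ^ 2 / 8) := by
  have hf := hasSum_zeta_two
  have he : HasSum (fun k : ℕ => (1:ℝ) / ((2 * k : ℕ):ℝ) ^ 2) (π ^ 2 / 6 / 4) := by
    have heq : (fun k : ℕ => (1:ℝ) / ((2 * k : ℕ):ℝ) ^ 2)
        = fun k : ℕ => (1:ℝ) / (k:ℝ) ^ 2 / 4 := by
      funext k
      push_cast
      rcases Nat.eq_zero_or_pos k with rfl | hk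
      · simp
      · have hk0 : ((k:ℝ)) ≠ 0 := Nat.cast_ne_zero.mpr hk.ne'
        field_simp; ring
    rw [heq]
    exact hf.div_const 4
  have hsum : Summable (fun k : ℕ => (1:ℝ) / ((2 * k + 1 : ℕ):ℝ) ^ 2) :=
    hf.summable.comp_injective (fun a b h => by omega)
  obtain ⟨L, hL⟩ := hsum
  have htot := HasSum.even_add_odd (f := fun n : ℕ => (1:ℝ) / (n:ℝ) ^ 2) he hL
  have hLv : L = π ^ 2 / 8 := by
    have := htot.unique hf
    linarith
  rw [hLv] at hL
  have heq2 : (fun k : ℕ => (1:ℝ) / ((2 * k + 1 : ℕ):ℝ) ^ 2)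
      = fun n : ℕ => 1 / (2 * (n:ℝ) + 1) ^ 2 := by
    funext k; push_cast; ring
  rwa [heq2] at hL

lemma integral_Ioo_log_div : ∫ u in Ioo (0:ℝ) 1, Real.log u / (u ^ 2 - 1) = π ^ 2 / 8 := by
  have hnorm : ∀ n : ℕ, (∫ u in Ioo (0:ℝ) 1, ‖u ^ (2 * n) * (-Real.log u)‖)
      = 1 / (2 * (n:ℝ) + 1) ^ 2 := by
    intro n
    rw [← integral_pow_neg_log n]
    refine setIntegral_congr_fun measurableSet_Ioo (fun u hu => ?_)
    have h1 : Real.log u ≤ 0 := Real.log_nonpos hu.1.le hu.2.le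
    exact Real.norm_of_nonneg (mul_nonneg (pow_nonneg hu.1.le _) (by linarith))
  have hF_sum : Summable (fun n : ℕ => ∫ u in Ioo (0:ℝ) 1, ‖u ^ (2 * n) * (-Real.log u)‖) := by
    simp_rw [hnorm]
    exact hasSum_odd_inv_sq.summable
  have hs := hasSum_integral_of_summable_integral_norm
    (F := fun (n : ℕ) (u : ℝ) => u ^ (2 * n) * (-Real.log u))
    (μ := volume.restrict (Ioo (0:ℝ) 1)) (fun n => integrableOn_pow_neg_log n) hF_sum
  have hval : (∫ u in Ioo (0:ℝ) 1, ∑' n : ℕ, u ^ (2 * n) * (-Real.log u))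
      = ∫ u in Ioo (0:ℝ) 1, Real.log u / (u ^ 2 - 1) := by
    refine setIntegral_congr_fun measurableSet_Ioo (fun u hu => ?_)
    have hu0 : (0:ℝ) < u := hu.1
    have hu1 : u < 1 := hu.2
    have hsq : u ^ 2 < 1 := by nlinarith
    have hne : u ^ 2 - 1 ≠ 0 := by nlinarith
    calc (∑' n : ℕ, u ^ (2 * n) * (-Real.log u))
        = (∑' n : ℕ, (u ^ 2) ^ n) * (-Real.log u) := by
          rw [tsum_mul_right]
          congr 1
          exact tsum_congr fun n => by rw [pow_mul]
      _ = (1 - u ^ 2)⁻¹ * (-Real.log u) := by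
          rw [tsum_geometric_of_lt_one (by positivity) hsq]
      _ = Real.log u / (u ^ 2 - 1) := by
          rw [div_eq_mul_inv, show u ^ 2 - 1 = -(1 - u ^ 2) by ring, inv_neg, mul_neg,
            ← neg_mul, mul_comm]
  rw [← hval]
  have heq : (fun n : ℕ => ∫ u in Ioo (0:ℝ) 1, u ^ (2 * n) * (-Real.log u))
      = fun n : ℕ => 1 / (2 * (n:ℝ) + 1) ^ 2 := funext integral_pow_neg_log
  rw [heq] at hs
  exact hs.unique hasSum_odd_inv_sq

lemma log_le_two_sqrt {u : ℝ} (hu : 1 ≤ u) : Real.log u ≤ 2 * Real.sqrt u := by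
  have h0 : (0:ℝ) < u := by linarith
  have hs : (0:ℝ) < Real.sqrt u := Real.sqrt_pos.mpr h0
  have h1 : Real.log (Real.sqrt u) ≤ Real.sqrt u - 1 := Real.log_le_sub_one_of_pos hs
  have h2 : Real.log u = 2 * Real.log (Real.sqrt u) := by
    rw [Real.log_sqrt h0.le]; ring
  linarith

lemma integrableOn_h_Ioi : IntegrableOn (fun u : ℝ => Real.log u / (u ^ 2 - 1)) (Ioi 1) := by
  have hmeas0 : Measurable (fun u : ℝ => Real.log u / (u ^ 2 - 1)) :=
    Real.measurable_log.div ((measurable_id.pow_const 2).sub measurable_const)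
  have hmeas : ∀ μ : Measure ℝ, AEStronglyMeasurable (fun u : ℝ => Real.log u / (u ^ 2 - 1)) μ :=
    fun μ => hmeas0.aestronglyMeasurable
  have key : ∀ u : ℝ, 1 < u → Real.log u / (u ^ 2 - 1) ≤ 1 / (u + 1) := by
    intro u hu
    have h1 : Real.log u ≤ u - 1 := Real.log_le_sub_one_of_pos (by linarith)
    have h2 : (0:ℝ) < u ^ 2 - 1 := by nlinarith
    rw [div_le_div_iff₀ h2 (by linarith)]
    nlinarith
  have hnn : ∀ u : ℝ, 1 < u → 0 ≤ Real.log u / (u ^ 2 - 1) := by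
    intro u hu
    have h2 : (0:ℝ) < u ^ 2 - 1 := by nlinarith
    exact div_nonneg (Real.log_nonneg hu.le) h2.le
  rw [show Ioi (1:ℝ) = Ioc 1 2 ∪ Ioi 2 by rw [Ioc_union_Ioi_eq_Ioi]; norm_num]
  apply IntegrableOn.union
  · apply Measure.integrableOn_of_bounded (M := 1)
    · rw [Real.volume_Ioc]; exact ENNReal.ofReal_ne_top
    · exact hmeas _
    · filter_upwards [ae_restrict_mem measurableSet_Ioc] with u hu
      have hu1 : 1 < u := hu.1
      rw [Real.norm_eq_abs, abs_of_nonneg (hnn u hu1)]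
      calc Real.log u / (u ^ 2 - 1) ≤ 1 / (u + 1) := key u hu1
        _ ≤ 1 := by rw [div_le_one (by linarith)]; linarith
  · have hint : IntegrableOn (fun u : ℝ => 3 * u ^ (-(3:ℝ)/2)) (Ioi 2) := by
      apply Integrable.const_mul
      exact integrableOn_Ioi_rpow_of_lt (by norm_num) (by norm_num)
    refine Integrable.mono' hint (hmeas _) ?_
    · filter_upwards [ae_restrict_mem measurableSet_Ioi] with u hu
      have hu2 : (2:ℝ) < u := hu
      have hu1 : (1:ℝ) < u := by linarith
      have h0 : (0:ℝ) < u := by linarith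
      rw [Real.norm_eq_abs, abs_of_nonneg (hnn u hu1)]
      have h2 : (3:ℝ)/4 * u ^ 2 ≤ u ^ 2 - 1 := by nlinarith
      have h3 : Real.log u ≤ 2 * Real.sqrt u := log_le_two_sqrt hu1.le
      have hs : Real.sqrt u = u ^ ((1:ℝ)/2) := Real.sqrt_eq_rpow u
      have h4 : u ^ ((1:ℝ)/2) / (u ^ 2) = u ^ (-(3:ℝ)/2) := by
        rw [← Real.rpow_natCast u 2, ← Real.rpow_sub h0]
        norm_num
      have h5 : (0:ℝ) < u ^ 2 - 1 := by nlinarith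
      calc Real.log u / (u ^ 2 - 1) ≤ 2 * Real.sqrt u / (3/4 * u ^ 2) := by
            apply div_le_div₀ (by positivity) h3 (by positivity) h2
        _ = 8/3 * (u ^ ((1:ℝ)/2) / u ^ 2) := by rw [hs]; ring
        _ ≤ 3 * u ^ (-(3:ℝ)/2) := by rw [h4]; nlinarith [Real.rpow_pos_of_pos h0 (-(3:ℝ)/2)]

lemma integral_Ioi_log_div : ∫ u in Ioi (1:ℝ), Real.log u / (u ^ 2 - 1) = π ^ 2 / 8 := by
  rw [← integral_Ioo_log_div]
  have h := integral_inv_subst (c := 1) one_pos (fun u => Real.log u / (u ^ 2 - 1))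
  rw [inv_one] at h
  rw [h]
  refine setIntegral_congr_fun measurableSet_Ioi (fun x hx => ?_)
  have hx1 : (1:ℝ) < x := hx
  have hx0 : (0:ℝ) < x := by linarith
  have hne : x ^ 2 - 1 ≠ 0 := by nlinarith
  have hx0' : x ≠ 0 := hx0.ne'
  have hne' : 1 - x ^ 2 ≠ 0 := by nlinarith
  have h1 : (x⁻¹) ^ 2 - 1 = (1 - x ^ 2) / x ^ 2 := by field_simp
  rw [Real.log_inv, h1, div_div_eq_mul_div]
  field_simp
  ring

/-- Integrability of the main integrand on `Ioi a` for `a > 1`. -/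
lemma integrableOn_f_Ioi {a : ℝ} (ha : 1 < a) :
    IntegrableOn (fun u : ℝ => u ^ 2 * Real.log u / (u ^ 2 - 1) ^ 2) (Ioi a) := by
  have hmeas0 : Measurable (fun u : ℝ => u ^ 2 * Real.log u / (u ^ 2 - 1) ^ 2) :=
    ((measurable_id.pow_const 2).mul Real.measurable_log).div
      (((measurable_id.pow_const 2).sub measurable_const).pow_const 2)
  set c : ℝ := (a - 1) / a with hc
  have hc0 : 0 < c := by
    apply div_pos <;> linarith
  have hint : IntegrableOn (fun u : ℝ => (2 / c ^ 2) * u ^ (-(3:ℝ)/2)) (Ioi a) := by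
    apply Integrable.const_mul
    exact integrableOn_Ioi_rpow_of_lt (by norm_num) (by linarith)
  refine Integrable.mono' hint hmeas0.aestronglyMeasurable ?_
  filter_upwards [ae_restrict_mem measurableSet_Ioi] with u hu
  have hua : a < u := hu
  have hu1 : (1:ℝ) < u := ha.trans hua
  have h0 : (0:ℝ) < u := by linarith
  have h5 : (0:ℝ) < u ^ 2 - 1 := by nlinarith
  have hnn : 0 ≤ u ^ 2 * Real.log u / (u ^ 2 - 1) ^ 2 :=
    div_nonneg (mul_nonneg (by positivity) (Real.log_nonneg hu1.le)) (by positivity)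
  rw [Real.norm_eq_abs, abs_of_nonneg hnn]
  -- c * u ≤ u - 1
  have hcu : c * u ≤ u - 1 := by
    rw [hc, div_mul_eq_mul_div, div_le_iff₀ (by linarith : (0:ℝ) < a)]
    nlinarith
  have hcu0 : 0 < c * u := by positivity
  -- (u^2 - 1)^2 ≥ (u-1)^2 * u^2  since u+1 ≥ u
  have hkey : (c * u) ^ 2 * u ^ 2 ≤ (u ^ 2 - 1) ^ 2 := by
    have h6 : (u - 1) ^ 2 * u ^ 2 ≤ (u ^ 2 - 1) ^ 2 := by nlinarith
    have h7 : (c * u) ^ 2 ≤ (u - 1) ^ 2 := by nlinarith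
    nlinarith [sq_nonneg u]
  have h3 : Real.log u ≤ 2 * Real.sqrt u := log_le_two_sqrt hu1.le
  have hs : Real.sqrt u = u ^ ((1:ℝ)/2) := Real.sqrt_eq_rpow u
  have h4 : u ^ ((1:ℝ)/2) / (u ^ 2) = u ^ (-(3:ℝ)/2) := by
    rw [← Real.rpow_natCast u 2, ← Real.rpow_sub h0]
    norm_num
  have hpos : (0:ℝ) < (c * u) ^ 2 * u ^ 2 := by positivity
  calc u ^ 2 * Real.log u / (u ^ 2 - 1) ^ 2
      ≤ u ^ 2 * (2 * Real.sqrt u) / ((c * u) ^ 2 * u ^ 2) := by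
        apply div_le_div₀ (by positivity) (by nlinarith) hpos hkey
    _ = (2 / c ^ 2) * (u ^ ((1:ℝ)/2) / u ^ 2) := by
        rw [hs]; field_simp
    _ = (2 / c ^ 2) * u ^ (-(3:ℝ)/2) := by rw [h4]

/-- Integrability of `log u / (u²-1)²` on `Ioi a` for `a > 1`. -/
lemma integrableOn_g_Ioi {a : ℝ} (ha : 1 < a) :
    IntegrableOn (fun u : ℝ => Real.log u / (u ^ 2 - 1) ^ 2) (Ioi a) := by
  have hmeas0 : Measurable (fun u : ℝ => Real.log u / (u ^ 2 - 1) ^ 2) :=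
    Real.measurable_log.div
      (((measurable_id.pow_const 2).sub measurable_const).pow_const 2)
  refine Integrable.mono' (integrableOn_f_Ioi ha) hmeas0.aestronglyMeasurable ?_
  filter_upwards [ae_restrict_mem measurableSet_Ioi] with u hu
  have hu1 : (1:ℝ) < u := ha.trans hu
  have hlog : 0 ≤ Real.log u := Real.log_nonneg hu1.le
  have hpow : (0:ℝ) ≤ (u ^ 2 - 1) ^ 2 := by positivity
  rw [Real.norm_eq_abs, abs_of_nonneg (div_nonneg hlog hpow)]
  have h1 : (0:ℝ) < u ^ 2 - 1 := by nlinarith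
  have h2 : Real.log u ≤ u ^ 2 * Real.log u := by nlinarith [mul_nonneg h1.le hlog]
  gcongr



lemma key_identity {ε : ℝ} (hε : 0 < ε) (hε2 : ε < 1/2) :
    (∫ u in Ioc (0:ℝ) (1 - ε), u ^ 2 * Real.log u / (u ^ 2 - 1) ^ 2) +
      (∫ u in Ioi (1 + ε), u ^ 2 * Real.log u / (u ^ 2 - 1) ^ 2)
    = π ^ 2 / 8 - (∫ u in Ioc (1:ℝ) (1 + ε), Real.log u / (u ^ 2 - 1))
      + ∫ u in Ioc (1 + ε) (1 - ε)⁻¹, Real.log u / (u ^ 2 - 1) ^ 2 := by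
  have h1ε : (0:ℝ) < 1 - ε := by linarith
  set b : ℝ := (1 - ε)⁻¹ with hbdef
  have hb0 : (0:ℝ) < b := inv_pos.mpr h1ε
  have hbval : (1 - ε) * b = 1 := mul_inv_cancel₀ h1ε.ne'
  have hb : 1 + ε < b := by nlinarith
  have hb1 : (1:ℝ) < b := by linarith
  have h1e : (1:ℝ) < 1 + ε := by linarith
  -- Step A : substitution u ↦ u⁻¹ on the left piece
  have hA : (∫ u in Ioc (0:ℝ) (1 - ε), u ^ 2 * Real.log u / (u ^ 2 - 1) ^ 2)
      = - ∫ x in Ioi b, Real.log x / (x ^ 2 - 1) ^ 2 := by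
    rw [integral_Ioc_eq_integral_Ioo, show (1 - ε) = b⁻¹ by rw [hbdef, inv_inv],
      integral_inv_subst hb0, ← integral_neg]
    refine setIntegral_congr_fun measurableSet_Ioi (fun x hx => ?_)
    have hx1 : (1:ℝ) < x := hb1.trans hx
    have hx0 : x ≠ 0 := by positivity
    have hne : x ^ 2 - 1 ≠ 0 := by nlinarith
    have h1 : (x⁻¹) ^ 2 - 1 = (1 - x ^ 2) / x ^ 2 := by field_simp
    have hne1 : 1 - x ^ 2 ≠ 0 := by nlinarith
    rw [Real.log_inv, h1]
    rw [div_pow, div_div_eq_mul_div]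
    field_simp
    ring
  -- split Ioi (1+ε) for g
  have hsplit1 : (∫ u in Ioi (1 + ε), Real.log u / (u ^ 2 - 1) ^ 2)
      = (∫ u in Ioc (1 + ε) b, Real.log u / (u ^ 2 - 1) ^ 2)
        + ∫ u in Ioi b, Real.log u / (u ^ 2 - 1) ^ 2 := by
    rw [← Ioc_union_Ioi_eq_Ioi hb.le,
      setIntegral_union (Ioc_disjoint_Ioi le_rfl) measurableSet_Ioi
        ((integrableOn_g_Ioi h1e).mono_set Ioc_subset_Ioi_self)
        (integrableOn_g_Ioi hb1)]
  -- split Ioi 1 for h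
  have hsplit2 : (∫ u in Ioi (1:ℝ), Real.log u / (u ^ 2 - 1))
      = (∫ u in Ioc (1:ℝ) (1 + ε), Real.log u / (u ^ 2 - 1))
        + ∫ u in Ioi (1 + ε), Real.log u / (u ^ 2 - 1) := by
    rw [← Ioc_union_Ioi_eq_Ioi h1e.le,
      setIntegral_union (Ioc_disjoint_Ioi le_rfl) measurableSet_Ioi
        (integrableOn_h_Ioi.mono_set Ioc_subset_Ioi_self)
        (integrableOn_h_Ioi.mono_set (Ioi_subset_Ioi h1e.le))]
  -- f - g = h on Ioi (1+ε)
  have hfg : (∫ u in Ioi (1 + ε), u ^ 2 * Real.log u / (u ^ 2 - 1) ^ 2)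
      - (∫ u in Ioi (1 + ε), Real.log u / (u ^ 2 - 1) ^ 2)
      = ∫ u in Ioi (1 + ε), Real.log u / (u ^ 2 - 1) := by
    rw [← integral_sub (integrableOn_f_Ioi h1e) (integrableOn_g_Ioi h1e)]
    refine setIntegral_congr_fun measurableSet_Ioi (fun u hu => ?_)
    have hu1 : (1:ℝ) < u := h1e.trans hu
    have hne : u ^ 2 - 1 ≠ 0 := by nlinarith
    field_simp
  have hv := integral_Ioi_log_div
  linarith [hA, hsplit1, hsplit2, hfg, hv]



/-- The principal value integral `PV ∫_0^∞ u² log u / (u²−1)² du = π²/8`: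
removing a symmetric window `(1−ε, 1+ε)` around the singularity at `u = 1`
and letting `ε → 0⁺`. -/
theorem pv_integral_u_sq_log :
    Tendsto (fun ε : ℝ =>
        (∫ u in Set.Ioc (0 : ℝ) (1 - ε), u ^ 2 * Real.log u / (u ^ 2 - 1) ^ 2) +
          ∫ u in Set.Ioi (1 + ε), u ^ 2 * Real.log u / (u ^ 2 - 1) ^ 2)
      (nhdsWithin 0 (Set.Ioi 0)) (nhds (π ^ 2 / 8)) := by
  set C : ℝ → ℝ := fun ε => ∫ u in Ioc (1:ℝ) (1 + ε), Real.log u / (u ^ 2 - 1) with hCdef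
  set E : ℝ → ℝ := fun ε => ∫ u in Ioc (1 + ε) (1 - ε)⁻¹, Real.log u / (u ^ 2 - 1) ^ 2
    with hEdef
  have hmem : Ioo (0:ℝ) (1/2) ∈ nhdsWithin (0:ℝ) (Ioi 0) :=
    Ioo_mem_nhdsGT_of_mem ⟨le_refl 0, by norm_num⟩
  have hidlim : Tendsto (fun ε : ℝ => ε) (nhdsWithin (0:ℝ) (Ioi 0)) (nhds 0) :=
    tendsto_id.mono_left nhdsWithin_le_nhds
  -- C bounds
  have hC : Tendsto C (nhdsWithin (0:ℝ) (Ioi 0)) (nhds 0) := by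
    apply squeeze_zero' (Eventually.mono hmem ?_) (Eventually.mono hmem ?_) hidlim
    · intro ε hε
      apply setIntegral_nonneg measurableSet_Ioc
      intro u hu
      have hu1 : (1:ℝ) < u := hu.1
      have h2 : (0:ℝ) < u ^ 2 - 1 := by nlinarith
      exact div_nonneg (Real.log_nonneg hu1.le) h2.le
    · intro ε hε
      have hbound : ∀ u ∈ Ioc (1:ℝ) (1 + ε), Real.log u / (u ^ 2 - 1) ≤ 1 := by
        intro u hu
        have hu1 : (1:ℝ) < u := hu.1
        have h1 : Real.log u ≤ u - 1 := Real.log_le_sub_one_of_pos (by linarith)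
        have h2 : (0:ℝ) < u ^ 2 - 1 := by nlinarith
        rw [div_le_one h2]
        nlinarith [Real.log_nonneg hu1.le]
      calc C ε ≤ ∫ _ in Ioc (1:ℝ) (1 + ε), (1:ℝ) := by
            apply setIntegral_mono_on
              (integrableOn_h_Ioi.mono_set Ioc_subset_Ioi_self)
              (integrableOn_const (by rw [Real.volume_Ioc]; exact ENNReal.ofReal_ne_top))
              measurableSet_Ioc hbound
        _ = ε := by
            rw [setIntegral_const, Real.volume_real_Ioc_of_le (by linarith [hε.1] : (1:ℝ) ≤ 1 + ε), smul_eq_mul, mul_one]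
            ring
  -- E bounds
  have hE : Tendsto E (nhdsWithin (0:ℝ) (Ioi 0)) (nhds 0) := by
    apply squeeze_zero' (Eventually.mono hmem ?_) (Eventually.mono hmem ?_) hidlim
    · intro ε hε
      apply setIntegral_nonneg measurableSet_Ioc
      intro u hu
      have hu1 : (1:ℝ) < u := by have := hu.1; linarith [hε.1]
      exact div_nonneg (Real.log_nonneg hu1.le) (by positivity)
    · intro ε hε
      obtain ⟨hε0, hε2⟩ := hε
      have h1ε : (0:ℝ) < 1 - ε := by linarith
      have hbval : (1 - ε) * (1 - ε)⁻¹ = 1 := mul_inv_cancel₀ h1ε.ne'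
      have hb : 1 + ε < (1 - ε)⁻¹ := by nlinarith
      have h1e : (1:ℝ) < 1 + ε := by linarith
      have hbound : ∀ u ∈ Ioc (1 + ε) (1 - ε)⁻¹,
          Real.log u / (u ^ 2 - 1) ^ 2 ≤ 1 / (4 * ε) := by
        intro u hu
        have hu1 : 1 + ε < u := hu.1
        have hu1' : (1:ℝ) < u := by linarith
        have h1 : Real.log u ≤ u - 1 := Real.log_le_sub_one_of_pos (by linarith)
        have h2 : (0:ℝ) < u ^ 2 - 1 := by nlinarith
        rw [div_le_div_iff₀ (by positivity) (by positivity)]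
        have key : 4 * ε * (u - 1) ≤ (u ^ 2 - 1) ^ 2 := by
          have e : (u ^ 2 - 1) ^ 2 = (u - 1) ^ 2 * (u + 1) ^ 2 := by ring
          have h3 : ε ≤ u - 1 := by linarith
          have h5 : ε * (u - 1) ≤ (u - 1) ^ 2 := by nlinarith
          have h7 : 4 * (u - 1) ^ 2 ≤ (u - 1) ^ 2 * (u + 1) ^ 2 := by
            nlinarith [sq_nonneg (u - 1), sq_nonneg (u + 1)]
          nlinarith
        nlinarith [Real.log_nonneg hu1'.le]
      calc E ε ≤ ∫ _ in Ioc (1 + ε) (1 - ε)⁻¹, 1 / (4 * ε) := by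
            apply setIntegral_mono_on
              ((integrableOn_g_Ioi h1e).mono_set Ioc_subset_Ioi_self)
              (integrableOn_const (by rw [Real.volume_Ioc]; exact ENNReal.ofReal_ne_top))
              measurableSet_Ioc hbound
        _ = ((1 - ε)⁻¹ - (1 + ε)) * (1 / (4 * ε)) := by
            rw [setIntegral_const, Real.volume_real_Ioc_of_le hb.le, smul_eq_mul]
        _ ≤ ε := by
            have hval : (1 - ε)⁻¹ - (1 + ε) = ε ^ 2 / (1 - ε) := by
              field_simp
              ring
            rw [hval]
            rw [div_mul_div_comm, div_le_iff₀ (by positivity)]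
            nlinarith
  have hlim : Tendsto (fun ε : ℝ => π ^ 2 / 8 - C ε + E ε)
      (nhdsWithin (0:ℝ) (Ioi 0)) (nhds (π ^ 2 / 8)) := by
    have := (tendsto_const_nhds (α := ℝ) (x := π ^ 2 / 8)
      (f := nhdsWithin (0:ℝ) (Ioi 0))).sub hC |>.add hE
    simpa using this
  refine hlim.congr' ?_
  filter_upwards [hmem] with ε hε
  exact (key_identity hε.1 hε.2).symm
end

section
/- The principal value integral PV ∫_{-∞}^{∞} x·eˣ/(eˣ − e⁻ˣ)² dx equals (1/2)·∫_{-∞}^{∞} x/(eˣ − e⁻ˣ) dx, and both equal π²/8. -/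
open Real MeasureTheory Filter

open Set in
private lemma Dpos' {x : ℝ} (hx : 0 < x) : 0 < Real.exp x - Real.exp (-x) := by
  have := Real.exp_lt_exp.mpr (by linarith : -x < x); linarith

private lemma Dge' {x : ℝ} (hx : 0 < x) :
    x / 2 * Real.exp (x / 2) ≤ Real.exp x - Real.exp (-x) := by
  have h1 := Real.add_one_le_exp (x/2)
  have h2 : Real.exp (-(x/2)) ≤ 1 := by
    have := Real.exp_le_exp.mpr (by linarith : -(x/2) ≤ 0)
    simpa using this
  have ha : x/2 ≤ Real.exp (x/2) - Real.exp (-(x/2)) := by linarith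
  have e1 : Real.exp (x/2) * Real.exp (x/2) = Real.exp x := by
    rw [← Real.exp_add]; norm_num
  have e2 : Real.exp (-(x/2)) * Real.exp (-(x/2)) = Real.exp (-x) := by
    rw [← Real.exp_add]; ring_nf
  nlinarith [Real.exp_pos (x/2), Real.exp_pos (-(x/2))]

private lemma exp_half_cancel' (x : ℝ) : Real.exp (-(1/2) * x) * Real.exp (x/2) = 1 := by
  rw [← Real.exp_add]
  have : (-(1/2)*x + x/2 : ℝ) = 0 := by ring
  rw [this, Real.exp_zero]

private lemma g_le' {x : ℝ} (hx : 0 < x) :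
    x / (Real.exp x - Real.exp (-x)) ≤ 2 * Real.exp (-(1/2) * x) := by
  have hD := Dpos' hx
  have hh := Dge' hx
  rw [div_le_iff₀ hD]
  have key : 2 * Real.exp (-(1/2) * x) * (x / 2 * Real.exp (x / 2)) = x := by
    linear_combination x * exp_half_cancel' x
  calc x = 2 * Real.exp (-(1/2) * x) * (x / 2 * Real.exp (x / 2)) := key.symm
    _ ≤ 2 * Real.exp (-(1/2) * x) * (Real.exp x - Real.exp (-x)) :=
        mul_le_mul_of_nonneg_left hh (by positivity)

private lemma g_nonneg' {x : ℝ} (hx : 0 < x) : 0 ≤ x / (Real.exp x - Real.exp (-x)) :=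
  div_nonneg hx.le (Dpos' hx).le

private lemma g_meas' : Measurable (fun x : ℝ => x / (Real.exp x - Real.exp (-x))) :=
  measurable_id.div (Real.measurable_exp.sub (Real.measurable_exp.comp measurable_neg))

open Set in
private lemma bound_int' (a : ℝ) :
    IntegrableOn (fun x : ℝ => 2 * Real.exp (-(1/2) * x)) (Ioi a) :=
  (exp_neg_integrableOn_Ioi a (by norm_num : (0:ℝ) < 1/2)).const_mul 2

open Set in
private lemma g_int' : IntegrableOn (fun x : ℝ => x / (Real.exp x - Real.exp (-x))) (Ioi 0) := by
  refine Integrable.mono' (bound_int' 0) g_meas'.aestronglyMeasurable ?_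
  filter_upwards [ae_restrict_mem measurableSet_Ioi] with x hx
  rw [Real.norm_of_nonneg (g_nonneg' hx)]
  exact g_le' hx

set_option maxHeartbeats 1000000 in
private lemma odd_sq_hasSum' : HasSum (fun n : ℕ => (1:ℝ) / (2*(n:ℝ)+1) ^ 2) (π ^ 2 / 8) := by
  have hz := hasSum_zeta_two
  have he : HasSum (fun k : ℕ => (1:ℝ) / ((2*k : ℕ):ℝ) ^ 2) (π ^ 2 / 6 / 4) := by
    have h := hz.div_const 4
    convert h using 2 with k
    · rfl
    push_cast
    ring
  have hsum : Summable (fun k : ℕ => (1:ℝ) / ((2*k+1 : ℕ):ℝ) ^ 2) := by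
    have hinj : Function.Injective (fun k : ℕ => 2*k+1) := by
      intro a b h; simpa using h
    exact hz.summable.comp_injective hinj
  obtain ⟨c, hc⟩ := hsum
  have htot := HasSum.even_add_odd (f := fun n : ℕ => (1:ℝ)/(n:ℝ)^2) he hc
  have heq : π ^ 2 / 6 / 4 + c = π ^ 2 / 6 := htot.unique hz
  have hc8 : c = π ^ 2 / 8 := by linarith
  rw [hc8] at hc
  have hfe : (fun n : ℕ => (1:ℝ) / (2*(n:ℝ)+1) ^ 2)
      = fun k : ℕ => (1:ℝ) / ((2*k+1 : ℕ):ℝ) ^ 2 := by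
    funext k; push_cast; ring
  rw [hfe]; exact hc

open Set in
private lemma F_le' {x : ℝ} (hx : 0 < x) (n : ℕ) :
    x * Real.exp (-((2*(n:ℝ)+1) * x)) ≤ 2 * Real.exp (-(1/2) * x) := by
  have h1 := Real.add_one_le_exp (x/2)
  have hxe : x ≤ 2 * Real.exp (x/2) := by linarith
  have hexp : Real.exp (-((2*(n:ℝ)+1) * x)) ≤ Real.exp (-x) := by
    apply Real.exp_le_exp.mpr
    have : (0:ℝ) ≤ (n:ℝ) := n.cast_nonneg
    nlinarith
  calc x * Real.exp (-((2*(n:ℝ)+1) * x)) ≤ (2 * Real.exp (x/2)) * Real.exp (-x) :=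
        mul_le_mul hxe hexp (Real.exp_pos _).le (by positivity)
    _ = 2 * Real.exp (-(1/2) * x) := by
        rw [mul_assoc, ← Real.exp_add]
        congr 1
        ring

open Set in
private lemma F_int' (n : ℕ) :
    IntegrableOn (fun x : ℝ => x * Real.exp (-((2*(n:ℝ)+1) * x))) (Ioi 0) := by
  refine Integrable.mono' (bound_int' 0) ?_ ?_
  · exact (measurable_id.mul (Real.measurable_exp.comp
      (measurable_const.mul measurable_id).neg)).aestronglyMeasurable
  · filter_upwards [ae_restrict_mem measurableSet_Ioi] with x hx
    rw [Real.norm_of_nonneg (mul_nonneg hx.le (Real.exp_pos _).le)]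
    exact F_le' hx n

open Set in
private lemma F_val' (n : ℕ) :
    ∫ x in Ioi (0:ℝ), x * Real.exp (-((2*(n:ℝ)+1) * x)) = 1 / (2*(n:ℝ)+1) ^ 2 := by
  have hr : (0:ℝ) < 2*(n:ℝ)+1 := by positivity
  have h := integral_rpow_mul_exp_neg_mul_Ioi (a := 2) (r := 2*(n:ℝ)+1) two_pos hr
  rw [Real.Gamma_two, mul_one] at h
  rw [show ((2:ℝ) - 1) = 1 by norm_num] at h
  simp_rw [Real.rpow_one] at h
  rw [h, show ((2:ℝ)) = ((2:ℕ):ℝ) by norm_num, Real.rpow_natCast]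
  rw [div_pow, one_pow]

open Set in
private lemma tsum_F' {x : ℝ} (hx : 0 < x) :
    ∑' n : ℕ, x * Real.exp (-((2*(n:ℝ)+1) * x)) = x / (Real.exp x - Real.exp (-x)) := by
  have hr0 : (0:ℝ) ≤ Real.exp (-(2*x)) := (Real.exp_pos _).le
  have hr1 : Real.exp (-(2*x)) < 1 := by
    have := Real.exp_lt_exp.mpr (show -(2*x) < 0 by linarith)
    simpa using this
  have hterm : ∀ n : ℕ, x * Real.exp (-((2*(n:ℝ)+1) * x))
      = (x * Real.exp (-x)) * (Real.exp (-(2*x)))^n := by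
    intro n
    rw [← Real.exp_nat_mul, mul_assoc, ← Real.exp_add]
    congr 1
    ring
  rw [tsum_congr hterm, tsum_mul_left, tsum_geometric_of_lt_one hr0 hr1]
  have h1 : 1 - Real.exp (-(2*x)) = Real.exp (-x) * (Real.exp x - Real.exp (-x)) := by
    rw [mul_sub, ← Real.exp_add, ← Real.exp_add, show (-x + x) = (0:ℝ) by ring,
      show (-x + -x) = -(2*x) by ring, Real.exp_zero]
  rw [h1]
  have hD := (Dpos' hx).ne'
  have he := Real.exp_ne_zero (-x)
  field_simp

open Set in
private lemma integral_g' :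
    ∫ x in Ioi (0:ℝ), x / (Real.exp x - Real.exp (-x)) = π ^ 2 / 8 := by
  have hnorm : ∀ n : ℕ, (∫ x in Ioi (0:ℝ), ‖x * Real.exp (-((2*(n:ℝ)+1)*x))‖)
      = 1/(2*(n:ℝ)+1)^2 := by
    intro n
    rw [← F_val' n]
    refine setIntegral_congr_fun measurableSet_Ioi fun x hx => ?_
    exact Real.norm_of_nonneg (mul_nonneg (le_of_lt hx) (Real.exp_pos _).le)
  have hF_sum : Summable (fun n : ℕ => ∫ x in Ioi (0:ℝ), ‖x * Real.exp (-((2*(n:ℝ)+1) * x))‖) := by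
    rw [funext hnorm]
    exact odd_sq_hasSum'.summable
  have hs := MeasureTheory.hasSum_integral_of_summable_integral_norm
    (F := fun (n : ℕ) (x : ℝ) => x * Real.exp (-((2*(n:ℝ)+1) * x))) F_int' hF_sum
  have h2 : (∫ x in Ioi (0:ℝ), ∑' n : ℕ, x * Real.exp (-((2*(n:ℝ)+1) * x)))
      = ∫ x in Ioi (0:ℝ), x / (Real.exp x - Real.exp (-x)) :=
    setIntegral_congr_fun measurableSet_Ioi fun x hx => tsum_F' hx
  have h3 : (fun n : ℕ => ∫ x in Ioi (0:ℝ), x * Real.exp (-((2*(n:ℝ)+1) * x)))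
      = fun n : ℕ => 1/(2*(n:ℝ)+1)^2 := funext F_val'
  rw [h3, h2] at hs
  exact hs.unique odd_sq_hasSum'

open Set in
private lemma tendsto_tail' :
    Tendsto (fun ε : ℝ => ∫ x in Ioi ε, x / (Real.exp x - Real.exp (-x)))
      (nhdsWithin 0 (Ioi 0)) (nhds (π ^ 2 / 8)) := by
  have key : ∀ ε ∈ Ioi (0:ℝ),
      (∫ x in Ioi (0:ℝ), x / (Real.exp x - Real.exp (-x)))
        - ∫ x in Ioc (0:ℝ) ε, x / (Real.exp x - Real.exp (-x))
      = ∫ x in Ioi ε, x / (Real.exp x - Real.exp (-x)) := by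
    intro ε hε
    have h1 : IntegrableOn (fun x : ℝ => x / (Real.exp x - Real.exp (-x))) (Ioc 0 ε) :=
      g_int'.mono_set Ioc_subset_Ioi_self
    have h2 : IntegrableOn (fun x : ℝ => x / (Real.exp x - Real.exp (-x))) (Ioi ε) :=
      g_int'.mono_set (Ioi_subset_Ioi (le_of_lt hε))
    have hsplit := setIntegral_union (Ioc_disjoint_Ioi le_rfl) measurableSet_Ioi h1 h2
    rw [Ioc_union_Ioi_eq_Ioi (le_of_lt hε)] at hsplit
    rw [hsplit]; ring
  have h0 : Tendsto (fun ε : ℝ => ∫ x in Ioc (0:ℝ) ε, x / (Real.exp x - Real.exp (-x)))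
      (nhdsWithin 0 (Ioi 0)) (nhds 0) := by
    have h2ε : Tendsto (fun ε : ℝ => 2 * ε) (nhdsWithin 0 (Ioi 0)) (nhds 0) := by
      simpa using ((continuous_mul_left (2:ℝ)).tendsto (0:ℝ)).mono_left
        nhdsWithin_le_nhds
    apply squeeze_zero_norm' _ h2ε
    filter_upwards [eventually_nhdsWithin_of_forall (fun (ε : ℝ) (hε : ε ∈ Ioi (0:ℝ)) => hε)]
      with ε (hε : 0 < ε)
    have hb : ‖∫ x in Ioc (0:ℝ) ε, x / (Real.exp x - Real.exp (-x))‖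
        ≤ 2 * (volume (Ioc (0:ℝ) ε)).toReal := by
      refine norm_setIntegral_le_of_norm_le_const ?_ ?_
      · rw [Real.volume_Ioc]; exact ENNReal.ofReal_lt_top
      · intro x hx
        rw [Real.norm_of_nonneg (g_nonneg' hx.1)]
        calc x / (Real.exp x - Real.exp (-x)) ≤ 2 * Real.exp (-(1/2) * x) := g_le' hx.1
          _ ≤ 2 * 1 := by
              have h1 : Real.exp (-(1/2) * x) ≤ 1 := by
                rw [Real.exp_le_one_iff]; nlinarith [hx.1]
              linarith
          _ = 2 := by norm_num
    calc ‖∫ x in Ioc (0:ℝ) ε, x / (Real.exp x - Real.exp (-x))‖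
        ≤ 2 * (volume (Ioc (0:ℝ) ε)).toReal := hb
      _ = 2 * ε := by rw [Real.volume_Ioc, ENNReal.toReal_ofReal (by linarith), sub_zero]
  have hT := (tendsto_const_nhds (x := ∫ x in Ioi (0:ℝ), x / (Real.exp x - Real.exp (-x)))
    (f := nhdsWithin (0:ℝ) (Ioi 0))).sub h0
  rw [sub_zero] at hT
  have := hT.congr' (eventually_nhdsWithin_of_forall key)
  rwa [integral_g'] at this

open Set in
private lemma f_le' {ε x : ℝ} (hε : 0 < ε) (hx : ε < x) :
    x * Real.exp x / (Real.exp x - Real.exp (-x)) ^ 2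
      ≤ 2 / (1 - Real.exp (-(2*ε))) * Real.exp (-(1/2) * x) := by
  have hc : 0 < 1 - Real.exp (-(2*ε)) := by
    have : Real.exp (-(2*ε)) < 1 := by rw [Real.exp_lt_one_iff]; linarith
    linarith
  have hx0 : 0 < x := hε.trans hx
  have hD := Dpos' hx0
  have hD1 := Dge' hx0
  have hD2 : Real.exp x * (1 - Real.exp (-(2*ε))) ≤ Real.exp x - Real.exp (-x) := by
    have he : Real.exp (-x) = Real.exp x * Real.exp (-(2*x)) := by
      rw [← Real.exp_add]; congr 1; ring
    have hmono : Real.exp (-(2*x)) ≤ Real.exp (-(2*ε)) := Real.exp_le_exp.mpr (by linarith)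
    have hmul := mul_le_mul_of_nonneg_left hmono (Real.exp_pos x).le
    nlinarith
  have hsq : (x/2 * Real.exp (x/2)) * (Real.exp x * (1 - Real.exp (-(2*ε))))
      ≤ (Real.exp x - Real.exp (-x)) ^ 2 := by
    rw [sq]
    exact mul_le_mul hD1 hD2 (by positivity) hD.le
  have hpos : 0 < (x/2 * Real.exp (x/2)) * (Real.exp x * (1 - Real.exp (-(2*ε)))) := by positivity
  calc x * Real.exp x / (Real.exp x - Real.exp (-x)) ^ 2
      ≤ x * Real.exp x / ((x/2 * Real.exp (x/2)) * (Real.exp x * (1 - Real.exp (-(2*ε))))) := by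
        apply div_le_div_of_nonneg_left (by positivity) hpos hsq
    _ = 2 / (1 - Real.exp (-(2*ε))) * Real.exp (-(1/2) * x) := by
        rw [show Real.exp (-(1/2) * x) = (Real.exp (x/2))⁻¹ by
          rw [← Real.exp_neg]; congr 1; ring]
        field_simp [hx0.ne', hc.ne', Real.exp_ne_zero]

open Set in
private lemma bound_int2' {ε : ℝ} (hε : 0 < ε) :
    IntegrableOn (fun x : ℝ => 2 / (1 - Real.exp (-(2*ε))) * Real.exp (-(1/2) * x)) (Ioi ε) :=
  (exp_neg_integrableOn_Ioi ε (by norm_num : (0:ℝ) < 1/2)).const_mul _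

private lemma f_meas' :
    Measurable (fun x : ℝ => x * Real.exp x / (Real.exp x - Real.exp (-x)) ^ 2) :=
  (measurable_id.mul Real.measurable_exp).div
    ((Real.measurable_exp.sub (Real.measurable_exp.comp measurable_neg)).pow_const 2)

open Set in
private lemma f_int' {ε : ℝ} (hε : 0 < ε) :
    IntegrableOn (fun x : ℝ => x * Real.exp x / (Real.exp x - Real.exp (-x)) ^ 2) (Ioi ε) := by
  refine Integrable.mono' (bound_int2' hε) f_meas'.aestronglyMeasurable ?_
  filter_upwards [ae_restrict_mem measurableSet_Ioi] with x hx
  have hx0 : 0 < x := hε.trans hx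
  rw [Real.norm_of_nonneg (div_nonneg (mul_nonneg hx0.le (Real.exp_pos _).le) (sq_nonneg _))]
  exact f_le' hε hx

private lemma fneg_rw' (x : ℝ) : (-x) * Real.exp (-x) / (Real.exp (-x) - Real.exp x) ^ 2
    = -(x * Real.exp (-x) / (Real.exp x - Real.exp (-x)) ^ 2) := by
  rw [show Real.exp (-x) - Real.exp x = -(Real.exp x - Real.exp (-x)) by ring, neg_sq]
  ring

open Set in
private lemma fneg_int' {ε : ℝ} (hε : 0 < ε) :
    IntegrableOn (fun x : ℝ => (-x) * Real.exp (-x) / (Real.exp (-x) - Real.exp x) ^ 2)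
      (Ioi ε) := by
  refine Integrable.mono' (bound_int2' hε) ?_ ?_
  · exact ((measurable_neg.mul (Real.measurable_exp.comp measurable_neg)).div
      (((Real.measurable_exp.comp measurable_neg).sub
        Real.measurable_exp).pow_const 2)).aestronglyMeasurable
  · filter_upwards [ae_restrict_mem measurableSet_Ioi] with x hx
    have hx0 : 0 < x := hε.trans hx
    have hD := Dpos' hx0
    rw [fneg_rw' x, norm_neg,
      Real.norm_of_nonneg (div_nonneg (mul_nonneg hx0.le (Real.exp_pos _).le) (sq_nonneg _))]
    calc x * Real.exp (-x) / (Real.exp x - Real.exp (-x)) ^ 2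
        ≤ x * Real.exp x / (Real.exp x - Real.exp (-x)) ^ 2 := by
          exact (div_le_div_iff_of_pos_right (pow_pos hD 2)).mpr
            (mul_le_mul_of_nonneg_left (Real.exp_le_exp.mpr (by linarith)) hx0.le)
      _ ≤ _ := f_le' hε hx

open Set in
private lemma pv_eq' {ε : ℝ} (hε : 0 < ε) :
    (∫ x in Iic (-ε), x * Real.exp x / (Real.exp x - Real.exp (-x)) ^ 2) +
      (∫ x in Ioi ε, x * Real.exp x / (Real.exp x - Real.exp (-x)) ^ 2)
    = ∫ x in Ioi ε, x / (Real.exp x - Real.exp (-x)) := by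
  have hIic : (∫ x in Iic (-ε), x * Real.exp x / (Real.exp x - Real.exp (-x)) ^ 2)
      = ∫ x in Ioi ε, (-x) * Real.exp (-x) / (Real.exp (-x) - Real.exp x) ^ 2 := by
    rw [← integral_comp_neg_Ioi]
    refine setIntegral_congr_fun measurableSet_Ioi fun x _ => ?_
    rw [neg_neg]
  rw [hIic, ← integral_add (fneg_int' hε) (f_int' hε)]
  refine setIntegral_congr_fun measurableSet_Ioi fun x hx => ?_
  have hx0 : 0 < x := hε.trans hx
  have hD := (Dpos' hx0).ne'
  rw [fneg_rw' x]
  field_simp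
  ring

/-- The principal value integral `PV ∫_ℝ x eˣ/(eˣ−e⁻ˣ)² dx` equals
`(1/2) ∫_ℝ x/(eˣ−e⁻ˣ) dx`, and both equal `π²/8`. -/
theorem pv_integral_x_exp :
    Tendsto (fun ε : ℝ =>
        (∫ x in Set.Iic (-ε), x * Real.exp x / (Real.exp x - Real.exp (-x)) ^ 2) +
          ∫ x in Set.Ioi ε, x * Real.exp x / (Real.exp x - Real.exp (-x)) ^ 2)
      (nhdsWithin 0 (Set.Ioi 0)) (nhds (π ^ 2 / 8)) ∧
    (1 / 2) * ∫ x : ℝ, x / (Real.exp x - Real.exp (-x)) = π ^ 2 / 8 := by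
  constructor
  · exact tendsto_tail'.congr'
      (eventually_nhdsWithin_of_forall fun ε hε => (pv_eq' hε).symm)
  · have habs : ∀ x : ℝ, |x| / (Real.exp |x| - Real.exp (-|x|))
        = x / (Real.exp x - Real.exp (-x)) := by
      intro x
      rcases abs_cases x with ⟨h1, _⟩ | ⟨h1, _⟩
      · rw [h1]
      · rw [h1, neg_neg,
          show Real.exp (-x) - Real.exp x = -(Real.exp x - Real.exp (-x)) by ring,
          neg_div_neg_eq]
    have h2 : (∫ x : ℝ, x / (Real.exp x - Real.exp (-x)))
        = 2 * ∫ x in Set.Ioi (0:ℝ), x / (Real.exp x - Real.exp (-x)) := by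
      rw [← integral_comp_abs (f := fun x => x / (Real.exp x - Real.exp (-x)))]
      rw [show (fun x : ℝ => |x| / (Real.exp |x| - Real.exp (-|x|)))
        = (fun x : ℝ => x / (Real.exp x - Real.exp (-x))) from funext habs]
    rw [h2, integral_g']
    ring
end

section
/- For every x > 0, the principal value integral PV ∫_0^∞ 2xy / ((y−x)(y+x)²) dy equals 1. -/
open Real MeasureTheory Filter

/-- The principal value integral `PV ∫_0^∞ 2xy/((y−x)(y+x)²) dy = 1` for every `x > 0`. -/
theorem pv_integral_two_xy (x : ℝ) (hx : 0 < x) :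
    Tendsto (fun ε : ℝ =>
        (∫ y in Set.Ioc (0 : ℝ) (x - ε), 2 * x * y / ((y - x) * (y + x) ^ 2)) +
          ∫ y in Set.Ioi (x + ε), 2 * x * y / ((y - x) * (y + x) ^ 2))
      (nhdsWithin 0 (Set.Ioi 0)) (nhds 1) := by
  set f : ℝ → ℝ := fun y => 2 * x * y / ((y - x) * (y + x) ^ 2) with hf
  set F : ℝ → ℝ := fun y => Real.log (y - x) / 2 - Real.log (y + x) / 2 - x / (y + x) with hFdef
  -- derivative of F is f away from the singularities
  have hder : ∀ y : ℝ, y ≠ x → y ≠ -x → HasDerivAt F (f y) y := by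
    intro y h1 h2
    have hy1 : y - x ≠ 0 := sub_ne_zero.mpr h1
    have hy2 : y + x ≠ 0 := by
      intro h; apply h2; linarith [h]
    have d1 : HasDerivAt (fun y : ℝ => Real.log (y - x)) (y - x)⁻¹ y := by
      simpa using (((hasDerivAt_id y).sub_const x).log hy1)
    have d2 : HasDerivAt (fun y : ℝ => Real.log (y + x)) (y + x)⁻¹ y := by
      simpa using (((hasDerivAt_id y).add_const x).log hy2)
    have d3 : HasDerivAt (fun y : ℝ => x / (y + x)) (-x / (y + x) ^ 2) y := by
      have := (hasDerivAt_const y x).div ((hasDerivAt_id y).add_const x) hy2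
      rw [show -x / (y + x) ^ 2 = (0 * (y + x) - x * 1) / (y + x) ^ 2 by ring]
      simpa [Pi.div_def] using this
    have := ((d1.div_const 2).sub (d2.div_const 2)).sub d3
    convert this using 1
    · rfl
    · rfl
    · rfl
    have hd : (y - x) * (y + x) ^ 2 ≠ 0 := mul_ne_zero hy1 (pow_ne_zero 2 hy2)
    rw [hf]
    rw [div_eq_iff hd]
    field_simp
    ring
  -- F tends to 0 at infinity
  have hFtop : Tendsto F atTop (nhds 0) := by
    have hq : Tendsto (fun y : ℝ => (y - x) / (y + x)) atTop (nhds 1) := by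
      have h2 : Tendsto (fun y : ℝ => (2 * x) / (y + x)) atTop (nhds 0) :=
        tendsto_const_nhds.div_atTop (tendsto_atTop_add_const_right _ x tendsto_id)
      have : Tendsto (fun y : ℝ => 1 - 2 * x / (y + x)) atTop (nhds (1 - 0)) :=
        tendsto_const_nhds.sub h2
      rw [sub_zero] at this
      refine (this.congr' ?_)
      filter_upwards [eventually_gt_atTop x] with y hy
      have hy2 : y + x ≠ 0 := ne_of_gt (by linarith)
      field_simp
      ring
    have hlog : Tendsto (fun y : ℝ => Real.log ((y - x) / (y + x))) atTop (nhds 0) := by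
      have := (Real.continuousAt_log one_ne_zero).tendsto.comp hq
      simpa [Function.comp_def] using this
    have hx2 : Tendsto (fun y : ℝ => x / (y + x)) atTop (nhds 0) :=
      tendsto_const_nhds.div_atTop (tendsto_atTop_add_const_right _ x tendsto_id)
    have := (hlog.div_const 2).sub hx2
    rw [show (0 : ℝ) = 0 / 2 - 0 by norm_num]
    refine this.congr' ?_
    filter_upwards [eventually_gt_atTop x] with y hy
    have hy1 : y - x ≠ 0 := by intro h; nlinarith
    have hy2 : y + x ≠ 0 := ne_of_gt (by linarith)
    simp only [hFdef]
    rw [Real.log_div hy1 hy2]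
    ring
  -- the explicit value for small positive ε
  have key : ∀ ε : ℝ, ε ∈ Set.Ioo (0 : ℝ) x →
      (∫ y in Set.Ioc (0 : ℝ) (x - ε), f y) + ∫ y in Set.Ioi (x + ε), f y =
        Real.log (2 * x + ε) / 2 - Real.log (2 * x - ε) / 2
          + x / (2 * x + ε) - x / (2 * x - ε) + 1 := by
    intro ε ⟨hε0, hεx⟩
    -- first integral
    have h1 : (∫ y in Set.Ioc (0 : ℝ) (x - ε), f y) = F (x - ε) - F 0 := by
      rw [← intervalIntegral.integral_of_le (by linarith)]
      apply intervalIntegral.integral_eq_sub_of_hasDerivAt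
      · intro t ht
        rw [Set.uIcc_of_le (by linarith)] at ht
        exact hder t (by intro h; rw [h] at ht; linarith [ht.2])
          (by intro h; rw [h] at ht; linarith [ht.1])
      · apply ContinuousOn.intervalIntegrable
        apply ContinuousOn.div (by fun_prop) (by fun_prop)
        intro t ht
        rw [Set.uIcc_of_le (by linarith)] at ht
        have ht1 : t - x ≠ 0 := by intro h; nlinarith [ht.2]
        have ht2 : t + x ≠ 0 := by intro h; nlinarith [ht.1]
        positivity
    -- second integral
    have h2 : (∫ y in Set.Ioi (x + ε), f y) = 0 - F (x + ε) := by
      apply integral_Ioi_of_hasDerivAt_of_nonneg'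
      · intro y hy
        have : x + ε ≤ y := hy
        exact hder y (by intro h; rw [h] at this; linarith)
          (by intro h; rw [h] at this; linarith)
      · intro y hy
        have : x + ε < y := hy
        have h1 : 0 < y - x := by linarith
        have h2 : 0 < y + x := by linarith
        have h3 : 0 < y := by linarith
        positivity
      · exact hFtop
    rw [h1, h2]
    have e1 : F (x - ε) = Real.log ε / 2 - Real.log (2 * x - ε) / 2 - x / (2 * x - ε) := by
      simp only [hFdef]
      rw [show x - ε - x = -ε by ring, show x - ε + x = 2 * x - ε by ring, Real.log_neg_eq_log]
    have e2 : F 0 = -1 := by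
      simp only [hFdef]
      rw [show (0 : ℝ) - x = -x by ring, zero_add, Real.log_neg_eq_log,
        div_self hx.ne']
      ring
    have e3 : F (x + ε) = Real.log ε / 2 - Real.log (2 * x + ε) / 2 - x / (2 * x + ε) := by
      simp only [hFdef]
      rw [show x + ε - x = ε by ring, show x + ε + x = 2 * x + ε by ring]
    rw [e1, e2, e3]; ring
  -- limit of the explicit expression
  have hlim : Tendsto (fun ε : ℝ =>
      Real.log (2 * x + ε) / 2 - Real.log (2 * x - ε) / 2
        + x / (2 * x + ε) - x / (2 * x - ε) + 1) (nhdsWithin 0 (Set.Ioi 0)) (nhds 1) := by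
    have h2x : (2 * x : ℝ) ≠ 0 := by positivity
    have ta : Tendsto (fun ε : ℝ => 2 * x + ε) (nhds 0) (nhds (2 * x)) := by
      simpa [Pi.add_def] using ((continuous_const.add continuous_id).tendsto (0 : ℝ))
    have tb : Tendsto (fun ε : ℝ => 2 * x - ε) (nhds 0) (nhds (2 * x)) := by
      simpa [Pi.sub_def] using ((continuous_const.sub continuous_id).tendsto (0 : ℝ))
    have l1 : Tendsto (fun ε : ℝ => Real.log (2 * x + ε)) (nhds 0) (nhds (Real.log (2 * x))) :=
      (Real.continuousAt_log h2x).tendsto.comp ta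
    have l2 : Tendsto (fun ε : ℝ => Real.log (2 * x - ε)) (nhds 0) (nhds (Real.log (2 * x))) :=
      (Real.continuousAt_log h2x).tendsto.comp tb
    have l3 : Tendsto (fun ε : ℝ => x / (2 * x + ε)) (nhds 0) (nhds (x / (2 * x))) :=
      tendsto_const_nhds.div ta h2x
    have l4 : Tendsto (fun ε : ℝ => x / (2 * x - ε)) (nhds 0) (nhds (x / (2 * x))) :=
      tendsto_const_nhds.div tb h2x
    have := ((((l1.div_const 2).sub (l2.div_const 2)).add l3).sub l4).add
      (tendsto_const_nhds (x := (1:ℝ)))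
    have h1 : Real.log (2*x) / 2 - Real.log (2*x) / 2 + x / (2*x) - x / (2*x) + 1 = 1 := by ring
    rw [h1] at this
    exact this.mono_left nhdsWithin_le_nhds
  refine hlim.congr' ?_
  filter_upwards [Ioo_mem_nhdsGT_of_mem (by constructor <;> simp [hx] : (0:ℝ) ∈ Set.Ico 0 x)]
    with ε hε
  exact (key ε hε).symm
end
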